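/- Let L be a graph Laplacian with s ∈ ℝ^n, z = (I+L)⁻¹s. Let E₁, E₂ be edge Laplacians of edges (u₁,v₁) (not in L) and (u₂,v₂) (in L), δ₁ = χ₁ᵀz, δ₂ = χ₂ᵀz. Assume r₂,₁ = χ₂ᵀ(I+L+E₁)⁻¹χ₂ < 1 and L + E₁ − E₂ is PSD. If |δ₂| > (3√3/4)·|δ₁|, then sᵀ(I+L+E₁−E₂)⁻¹s > sᵀ(I+L)⁻¹s. -/

import Mathlib

open Matrix

variable {n : ℕ}

lemma vmv_mulVec (a b x : Fin n → ℝ) : vecMulVec a b *ᵥ x = (b ⬝ᵥ x) • a := by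
  ext i
  simp [vecMulVec, mulVec, dotProduct, Finset.mul_sum, mul_comm, mul_left_comm, mul_assoc]

lemma mul_vmv (X : Matrix (Fin n) (Fin n) ℝ) (a b : Fin n → ℝ) :
    X * vecMulVec a b = vecMulVec (X *ᵥ a) b := by
  ext i j
  simp [vecMulVec, mulVec, dotProduct, Matrix.mul_apply, Finset.mul_sum, Finset.sum_mul,
    mul_comm, mul_left_comm, mul_assoc]

lemma vmv_mul (a b : Fin n → ℝ) (X : Matrix (Fin n) (Fin n) ℝ) :
    vecMulVec a b * X = vecMulVec a (b ᵥ* X) := by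
  ext i j
  simp [vecMulVec, vecMul, mulVec, dotProduct, Matrix.mul_apply, Finset.mul_sum, mul_comm,
    mul_left_comm, mul_assoc]

lemma vmv_mul_vmv (a b c d : Fin n → ℝ) :
    vecMulVec a b * vecMulVec c d = (b ⬝ᵥ c) • vecMulVec a d := by
  ext i j
  simp [vecMulVec, dotProduct, Matrix.mul_apply, Finset.mul_sum, Finset.sum_mul, mul_comm,
    mul_left_comm, mul_assoc]

lemma symm_dot {Q : Matrix (Fin n) (Fin n) ℝ} (hQ : Qᵀ = Q) (x y : Fin n → ℝ) :
    x ⬝ᵥ Q *ᵥ y = y ⬝ᵥ Q *ᵥ x := by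
  conv_lhs => rw [← hQ]
  rw [Matrix.mulVec_transpose, dotProduct_comm, ← Matrix.dotProduct_mulVec]

lemma vmv_posSemidef (v : Fin n → ℝ) : (vecMulVec v v).PosSemidef := by
  refine Matrix.PosSemidef.of_dotProduct_mulVec_nonneg ?_ ?_
  · ext i j
    simp [vecMulVec, Matrix.conjTranspose_apply, mul_comm]
  · intro x
    have : vecMulVec v v *ᵥ x = (v ⬝ᵥ x) • v := vmv_mulVec v v x
    rw [this]
    simp only [star_trivial, dotProduct_smul, smul_eq_mul]
    have : x ⬝ᵥ v = v ⬝ᵥ x := dotProduct_comm x v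
    rw [this]
    exact mul_self_nonneg _

lemma le_of_sq_le_sq' {x y : ℝ} (hx : 0 ≤ x) (hy : 0 ≤ y) (h : x ^ 2 ≤ y ^ 2) : x ≤ y := by
  have := Real.sqrt_le_sqrt h
  rwa [Real.sqrt_sq hx, Real.sqrt_sq hy] at this

lemma sm (P : Matrix (Fin n) (Fin n) ℝ) (hP : IsUnit P.det) (v : Fin n → ℝ) (t k : ℝ)
    (hk : k * (1 + t * (v ⬝ᵥ P⁻¹ *ᵥ v)) = t) :
    (P + t • vecMulVec v v)⁻¹ = P⁻¹ - k • (P⁻¹ * vecMulVec v v * P⁻¹) := by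
  set E := vecMulVec v v with hE
  set c := v ⬝ᵥ P⁻¹ *ᵥ v with hc
  apply Matrix.inv_eq_right_inv
  have hEE : E * P⁻¹ * E = c • E := by
    rw [hE, vmv_mul, vmv_mul_vmv, ← Matrix.dotProduct_mulVec]
  have h1 : P * (P⁻¹ * E * P⁻¹) = E * P⁻¹ := by
    rw [← Matrix.mul_assoc, ← Matrix.mul_assoc, Matrix.mul_nonsing_inv _ hP, Matrix.one_mul]
  have h2 : E * (P⁻¹ * E * P⁻¹) = c • (E * P⁻¹) := by
    calc E * (P⁻¹ * E * P⁻¹) = (E * P⁻¹ * E) * P⁻¹ := by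
          simp only [Matrix.mul_assoc]
      _ = c • (E * P⁻¹) := by rw [hEE, Matrix.smul_mul]
  have key : ∀ W : Matrix (Fin n) (Fin n) ℝ, 1 - k • W + t • (W - k • (c • W)) = 1 := by
    intro W
    have h3 : t • (W - k • (c • W)) = (t - t * (k * c)) • W := by
      rw [smul_sub, smul_smul, smul_smul, sub_smul, mul_assoc]
    have h4 : t - t * (k * c) = k := by linear_combination -hk
    rw [h3, h4, sub_add_cancel]
  calc (P + t • E) * (P⁻¹ - k • (P⁻¹ * E * P⁻¹))
      = P * P⁻¹ - k • (P * (P⁻¹ * E * P⁻¹)) + t • (E * P⁻¹ - k • (E * (P⁻¹ * E * P⁻¹))) := by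
        rw [add_mul, Matrix.smul_mul, mul_sub, mul_sub, Matrix.mul_smul, Matrix.mul_smul]
    _ = 1 - k • (E * P⁻¹) + t • ((E * P⁻¹) - k • (c • (E * P⁻¹))) := by
        rw [h1, h2, Matrix.mul_nonsing_inv _ hP]
    _ = 1 := key _

open scoped MatrixOrder in
lemma cs {P : Matrix (Fin n) (Fin n) ℝ} (hP : P.PosSemidef) (x y : Fin n → ℝ) :
    (x ⬝ᵥ P *ᵥ y) ^ 2 ≤ (x ⬝ᵥ P *ᵥ x) * (y ⬝ᵥ P *ᵥ y) := by
  obtain ⟨B, rfl⟩ := CStarAlgebra.nonneg_iff_eq_star_mul_self.mp hP.nonneg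
  rw [star_eq_conjTranspose]
  have key : ∀ u w : Fin n → ℝ, u ⬝ᵥ (Bᴴ * B) *ᵥ w = (B *ᵥ u) ⬝ᵥ (B *ᵥ w) := by
    intro u w
    rw [← Matrix.mulVec_mulVec, Matrix.dotProduct_mulVec]
    congr 1
    rw [show Bᴴ = Bᵀ by ext i j; simp, Matrix.vecMul_transpose]
  rw [key, key, key]
  simpa [dotProduct, sq] using
    Finset.sum_mul_sq_le_sq_mul_sq Finset.univ (B *ᵥ x) (B *ᵥ y)

lemma dot_formula2 (Q : Matrix (Fin n) (Fin n) ℝ) (x s v : Fin n → ℝ) (k : ℝ) :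
    x ⬝ᵥ ((Q - k • (Q * vecMulVec v v * Q)) *ᵥ s) =
      x ⬝ᵥ Q *ᵥ s - k * ((x ⬝ᵥ Q *ᵥ v) * (v ⬝ᵥ Q *ᵥ s)) := by
  have h1 : (Q * vecMulVec v v * Q) *ᵥ s = (v ⬝ᵥ Q *ᵥ s) • (Q *ᵥ v) := by
    rw [← Matrix.mulVec_mulVec, ← Matrix.mulVec_mulVec, vmv_mulVec, Matrix.mulVec_smul]
  rw [Matrix.sub_mulVec, Matrix.smul_mulVec, h1, dotProduct_sub, dotProduct_smul,
    smul_eq_mul, dotProduct_smul, smul_eq_mul]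
  ring

lemma real_symm {A : Matrix (Fin n) (Fin n) ℝ} (h : A.IsHermitian) : Aᵀ = A := by
  have := h.eq
  rwa [show Aᴴ = Aᵀ by ext i j; simp] at this

set_option maxHeartbeats 2000000 in
theorem pd_increase_with_swap {n : ℕ}
    (L : Matrix (Fin n) (Fin n) ℝ) (hL : L.PosSemidef)
    (s z χ₁ χ₂ : Fin n → ℝ)
    (u₁ v₁ u₂ v₂ : Fin n) (h1 : u₁ ≠ v₁) (h2 : u₂ ≠ v₂)
    (hχ₁u : χ₁ u₁ = 1) (hχ₁v : χ₁ v₁ = -1)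
    (hχ₁ : ∀ w, w ≠ u₁ → w ≠ v₁ → χ₁ w = 0)
    (hχ₂u : χ₂ u₂ = 1) (hχ₂v : χ₂ v₂ = -1)
    (hχ₂ : ∀ w, w ≠ u₂ → w ≠ v₂ → χ₂ w = 0)
    (E₁ E₂ : Matrix (Fin n) (Fin n) ℝ)
    (hE₁ : E₁ = vecMulVec χ₁ χ₁) (hE₂ : E₂ = vecMulVec χ₂ χ₂)
    (hE2in : (L - E₂).PosSemidef)
    (hz : z = (1 + L)⁻¹ *ᵥ s)
    (δ₁ δ₂ r₂₁ : ℝ)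
    (hδ₁ : δ₁ = χ₁ ⬝ᵥ z) (hδ₂ : δ₂ = χ₂ ⬝ᵥ z)
    (hr₂₁ : r₂₁ = χ₂ ⬝ᵥ ((1 + L + E₁)⁻¹ *ᵥ χ₂))
    (hpsd : (L + E₁ - E₂).PosSemidef) (hlt : r₂₁ < 1)
    (hgap : |δ₂| > 3 * Real.sqrt 3 / 4 * |δ₁|) :
    s ⬝ᵥ ((1 + L + E₁ - E₂)⁻¹ *ᵥ s) > s ⬝ᵥ ((1 + L)⁻¹ *ᵥ s) := by
  classical
  set M : Matrix (Fin n) (Fin n) ℝ := 1 + L with hMdef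
  have hM : M.PosDef := Matrix.PosDef.add_posSemidef Matrix.PosDef.one hL
  have hMdet : IsUnit M.det := (Matrix.isUnit_iff_isUnit_det M).mp hM.isUnit
  have hMit : M⁻¹ᵀ = M⁻¹ := real_symm hM.inv.isHermitian
  have hMipsd := hM.inv.posSemidef
  set r₁ : ℝ := χ₁ ⬝ᵥ M⁻¹ *ᵥ χ₁ with hr₁def
  have hr₁0 : 0 ≤ r₁ := by simpa using hMipsd.dotProduct_mulVec_nonneg χ₁
  have h1r₁ : (0:ℝ) < 1 + r₁ := by linarith
  set k : ℝ := (1 + r₁)⁻¹ with hkdef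
  have hk0 : 0 < k := inv_pos.mpr h1r₁
  have hkmul : k * (1 + r₁) = 1 := inv_mul_cancel₀ h1r₁.ne'
  -- A = M + E₁
  have hAeq : M + E₁ = M + (1:ℝ) • vecMulVec χ₁ χ₁ := by rw [hE₁, one_smul]
  have hAinv : (M + E₁)⁻¹ = M⁻¹ - k • (M⁻¹ * vecMulVec χ₁ χ₁ * M⁻¹) := by
    rw [hAeq]
    exact sm M hMdet χ₁ 1 k (by rw [one_mul, ← hr₁def]; exact hkmul)
  have hA : (M + E₁).PosDef := by
    rw [hAeq, one_smul]; exact hM.add_posSemidef (vmv_posSemidef χ₁)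
  have hAdet : IsUnit (M + E₁).det := (Matrix.isUnit_iff_isUnit_det _).mp hA.isUnit
  have hAit : (M + E₁)⁻¹ᵀ = (M + E₁)⁻¹ := real_symm hA.inv.isHermitian
  have hr₂₁0 : 0 ≤ r₂₁ := by
    rw [hr₂₁]; simpa using hA.inv.posSemidef.dotProduct_mulVec_nonneg χ₂
  have hm1 : (0:ℝ) < 1 - r₂₁ := by linarith
  set m : ℝ := (1 - r₂₁)⁻¹ with hmdef
  have hm0 : 0 < m := inv_pos.mpr hm1
  have hmmul : m * (1 - r₂₁) = 1 := inv_mul_cancel₀ hm1.ne'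
  -- B = (M + E₁) - E₂
  have hBeq : M + E₁ - E₂ = (M + E₁) + (-1:ℝ) • vecMulVec χ₂ χ₂ := by
    rw [hE₂, neg_one_smul, ← sub_eq_add_neg]
  have hBinv : (M + E₁ - E₂)⁻¹ =
      (M + E₁)⁻¹ - (-m) • ((M + E₁)⁻¹ * vecMulVec χ₂ χ₂ * (M + E₁)⁻¹) := by
    rw [hBeq]
    refine sm (M + E₁) hAdet χ₂ (-1) (-m) ?_
    rw [show χ₂ ⬝ᵥ (M + E₁)⁻¹ *ᵥ χ₂ = r₂₁ from hr₂₁.symm]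
    nlinarith [hmmul]
  -- z and deltas
  have hzQ : z = M⁻¹ *ᵥ s := hz
  have hd₁ : χ₁ ⬝ᵥ M⁻¹ *ᵥ s = δ₁ := by rw [hδ₁, hzQ]
  have hd₂ : χ₂ ⬝ᵥ M⁻¹ *ᵥ s = δ₂ := by rw [hδ₂, hzQ]
  set g : ℝ := χ₂ ⬝ᵥ M⁻¹ *ᵥ χ₁ with hgdef
  set w : ℝ := δ₂ - k * g * δ₁ with hwdef
  have hw : χ₂ ⬝ᵥ (M + E₁)⁻¹ *ᵥ s = w := by
    rw [hAinv, dot_formula2, hd₂, ← hgdef, hd₁, hwdef]; ring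
  have hsA : s ⬝ᵥ (M + E₁)⁻¹ *ᵥ s = s ⬝ᵥ M⁻¹ *ᵥ s - k * (δ₁ * δ₁) := by
    rw [hAinv, dot_formula2, symm_dot hMit s χ₁, hd₁]
  have hsB : s ⬝ᵥ (M + E₁ - E₂)⁻¹ *ᵥ s = s ⬝ᵥ M⁻¹ *ᵥ s - k * (δ₁ * δ₁) + m * (w * w) := by
    rw [hBinv, dot_formula2, symm_dot hAit s χ₂, hw, hsA]; ring
  rw [hsB]
  -- r₂ and bounds
  set r₂ : ℝ := χ₂ ⬝ᵥ M⁻¹ *ᵥ χ₂ with hr₂def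
  have hr₂0 : 0 ≤ r₂ := by simpa using hMipsd.dotProduct_mulVec_nonneg χ₂
  have h0 : 0 ≤ r₂ - r₂ * r₂ := by
    set y : Fin n → ℝ := M⁻¹ *ᵥ χ₂ with hydef
    have hMy : M *ᵥ y = χ₂ := by
      rw [hydef, Matrix.mulVec_mulVec, Matrix.mul_nonsing_inv _ hMdet, Matrix.one_mulVec]
    have psd2 : (M - E₂).PosSemidef := by
      rw [hMdef, add_sub_assoc]
      exact Matrix.PosSemidef.add Matrix.PosSemidef.one hE2in
    have h0 : 0 ≤ y ⬝ᵥ (M - E₂) *ᵥ y := by simpa using psd2.dotProduct_mulVec_nonneg y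
    have hyx : χ₂ ⬝ᵥ y = r₂ := by rw [hydef, hr₂def]
    have hxy : y ⬝ᵥ χ₂ = r₂ := (dotProduct_comm y χ₂).trans hyx
    have hyE : y ⬝ᵥ E₂ *ᵥ y = r₂ * r₂ := by
      rw [hE₂, vmv_mulVec, dotProduct_smul, smul_eq_mul, hyx, hxy]
    have hyM : y ⬝ᵥ M *ᵥ y = r₂ := by rw [hMy, hxy]
    rw [Matrix.sub_mulVec, dotProduct_sub, hyM, hyE] at h0
    exact h0
  have hcs : g ^ 2 ≤ r₂ * r₁ := by
    have := cs hMipsd χ₂ χ₁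
    rw [← hgdef, ← hr₂def, ← hr₁def] at this
    exact this
  -- now the scalar inequality: m * (w * w) > k * (δ₁ * δ₁)
  clear_value r₁ k m g w r₂
  have hsuff : m * (w * w) > k * (δ₁ * δ₁) := by
    clear hr₂def hgdef hkdef hmdef hr₁def hr₂₁ hδ₁ hδ₂ hz hzQ hd₁ hd₂ hw hsA hsB
      hAinv hBinv hAeq hBeq hMit hAit hMipsd hM hA hMdet hAdet hMdef hE₁ hE₂ hE2in hpsd hL M
      L E₁ E₂ s z
    have hr₂1 : r₂ ≤ 1 := by nlinarith [hr₂0, h0]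
    have hg2 : g ^ 2 ≤ r₁ := by nlinarith [hcs, hr₁0, hr₂0, hr₂1]
    -- sqrt setup
    set a : ℝ := Real.sqrt r₁ with hadef
    set b : ℝ := Real.sqrt (1 + r₁) with hbdef
    have ha0 : 0 ≤ a := Real.sqrt_nonneg _
    have ha2 : a ^ 2 = r₁ := Real.sq_sqrt hr₁0
    have hb2 : b ^ 2 = 1 + r₁ := Real.sq_sqrt h1r₁.le
    have hb1 : 1 ≤ b := by
      apply le_of_sq_le_sq' zero_le_one (Real.sqrt_nonneg _)
      rw [hb2]; nlinarith [hr₁0]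
    have hb0 : 0 < b := lt_of_lt_of_le one_pos hb1
    have hs3 : Real.sqrt 3 ^ 2 = 3 := Real.sq_sqrt (by norm_num)
    have hs30 : 0 ≤ Real.sqrt 3 := Real.sqrt_nonneg _
    set K : ℝ := 3 * Real.sqrt 3 / 4 with hKdef
    have hK0 : 0 ≤ K := by positivity
    have hK2 : K ^ 2 = 27 / 16 := by
      rw [hKdef, div_pow, mul_pow, hs3]; norm_num
    clear_value a b K
    clear hadef hbdef hKdef hs3 hs30
    have step1 : a + b ≤ K * b ^ 2 := by
      apply le_of_sq_le_sq' (by positivity) (by positivity)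
      have h2ab : 2 * (a * b) ≤ 2 * a ^ 2 + b ^ 2 / 2 := by nlinarith [sq_nonneg (2 * a - b)]
      have h2ab' : 2 * (a * b) ≤ 2 * r₁ + (1 + r₁) / 2 := by
        rw [← hb2, ← ha2]; linarith [h2ab]
      have e2 : (K * b ^ 2) ^ 2 = 27 / 16 * (1 + r₁) ^ 2 := by
        rw [mul_pow, hK2, hb2]
      have e1 : (a + b) ^ 2 = a ^ 2 + 2 * (a * b) + b ^ 2 := by ring
      rw [e1, e2, ha2, hb2]
      linarith [sq_nonneg (3 * r₁ - 1), h2ab']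
    have hkb : k * b ^ 2 = 1 := by rw [hb2]; exact hkmul
    have hmge1 : 1 ≤ m := by nlinarith [hmmul, hm0, hlt, hr₂₁0]
    have hcabs : |k * g| * b ^ 2 ≤ a := by
      have hgle : |g| ≤ a := by
        apply le_of_sq_le_sq' (abs_nonneg g) ha0
        rw [sq_abs, ha2]; exact hg2
      have : |k * g| = k * |g| := by rw [abs_mul, abs_of_pos hk0]
      rw [this]
      calc k * |g| * b ^ 2 = |g| * (k * b ^ 2) := by ring
        _ = |g| := by rw [hkb, mul_one]
        _ ≤ a := hgle
    by_cases hδ₁0 : δ₁ = 0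
    · have hw0 : w = δ₂ := by rw [hwdef, hδ₁0]; ring
      have hδ₂0 : δ₂ ≠ 0 := by
        intro h
        rw [h, hδ₁0] at hgap
        simp at hgap
      rw [hw0, hδ₁0, mul_zero, mul_zero]
      exact mul_pos hm0 (mul_self_pos.mpr hδ₂0)
    · have hd1 : 0 < |δ₁| := abs_pos.mpr hδ₁0
      have habs : |δ₂| - |k * g| * |δ₁| ≤ |w| := by
        have h := abs_sub_abs_le_abs_sub δ₂ (k * g * δ₁)
        rw [abs_mul (k * g) δ₁] at h
        rw [← hwdef] at h
        exact h
      have h5 : b ≤ (K - |k * g|) * b ^ 2 := by nlinarith [step1, hcabs]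
      have h6 : 1 ≤ (K - |k * g|) * b := by nlinarith [h5, hb0, mul_pos hb0 hb0]
      have h8 : |δ₁| < |w| * b := by
        nlinarith [mul_pos (sub_pos.mpr hgap) hb0, mul_nonneg (sub_nonneg.mpr habs) hb0.le,
          mul_le_mul_of_nonneg_right h6 hd1.le]
      have h9 : |δ₁| * |δ₁| < (|w| * b) * (|w| * b) :=
        mul_lt_mul'' h8 h8 (abs_nonneg δ₁) (abs_nonneg δ₁)
      rw [abs_mul_abs_self δ₁] at h9
      have h9' : δ₁ * δ₁ < (w * w) * (b * b) := by
        calc δ₁ * δ₁ < (|w| * b) * (|w| * b) := h9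
          _ = (|w| * |w|) * (b * b) := by ring
          _ = (w * w) * (b * b) := by rw [abs_mul_abs_self w]
      have heq : k * ((w * w) * (b * b)) = w * w := by
        have : k * ((w * w) * (b * b)) = (w * w) * (k * b ^ 2) := by ring
        rw [this, hkb, mul_one]
      have h10 : k * (δ₁ * δ₁) < w * w := by
        have := mul_lt_mul_of_pos_left h9' hk0
        linarith [this, heq.le, heq.ge]
      have h11 : w * w ≤ m * (w * w) := le_mul_of_one_le_left (mul_self_nonneg w) hmge1
      linarith [h10, h11]
  linarith [hsuff]
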